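/- Let ω : [0,∞) → [0,∞) be a modulus of continuity with ω bounded, let 1 ≤ θ < ∞, and let σ = sup_{δ>0} ω(δ)/δ. Then lim_{α→1−} (1−α) ∫_0^∞ (t^{−α} ω(t))^θ dt/t = σ^θ/θ (in [0,∞], with both sides simultaneously infinite if σ = ∞). -/

import Mathlib

open MeasureTheory Filter

open Set
open scoped ENNReal Topology

lemma omega_nsmul (ω : ℝ → ℝ) (hnn : ∀ x : ℝ, 0 ≤ x → 0 ≤ ω x)
    (hsub : ∀ a b : ℝ, 0 ≤ a → 0 ≤ b → ω (a + b) ≤ ω a + ω b) (h0 : ω 0 = 0) :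
    ∀ n : ℕ, ∀ h : ℝ, 0 ≤ h → ω (n * h) ≤ n * ω h := by
  intro n
  induction n with
  | zero => intro h hh; simp [h0]
  | succ n ih =>
    intro h hh
    have e : ((n:ℝ)+1) * h = n*h + h := by ring
    push_cast
    rw [e]
    calc ω (n*h + h) ≤ ω (n*h) + ω h := hsub _ _ (by positivity) hh
    _ ≤ n * ω h + ω h := by linarith [ih h hh]
    _ = ((n:ℝ)+1) * ω h := by ring

lemma omega_ratio (ω : ℝ → ℝ) (hnn : ∀ x : ℝ, 0 ≤ x → 0 ≤ ω x)
    (hmono : ∀ a b : ℝ, 0 ≤ a → a ≤ b → ω a ≤ ω b)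
    (hsub : ∀ a b : ℝ, 0 ≤ a → 0 ≤ b → ω (a + b) ≤ ω a + ω b) (h0 : ω 0 = 0)
    {h t : ℝ} (hh : 0 < h) (hht : h ≤ t) :
    (ω t - ω h) / t ≤ ω h / h := by
  set n : ℕ := ⌊t / h⌋₊ with hn
  have ht : 0 < t := lt_of_lt_of_le hh hht
  have h1n : 1 ≤ n := Nat.le_floor (by rw [le_div_iff₀ hh]; simpa using hht)
  have hnh : (n:ℝ) * h ≤ t := by
    rw [← le_div_iff₀ hh]; exact Nat.floor_le (by positivity)
  have htn : t < ((n:ℝ) + 1) * h := by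
    rw [← div_lt_iff₀ hh]
    have := Nat.lt_floor_add_one (t/h)
    push_cast at this ⊢
    linarith
  have hωt : ω t ≤ (n:ℝ) * ω h + ω h := by
    calc ω t = ω ((n:ℝ)*h + (t - n*h)) := by rw [show (n:ℝ)*h + (t-(n:ℝ)*h) = t by ring]
    _ ≤ ω ((n:ℝ)*h) + ω (t - n*h) := hsub _ _ (by positivity) (by linarith)
    _ ≤ (n:ℝ) * ω h + ω h := by
        have h1 := omega_nsmul ω hnn hsub h0 n h hh.le
        have h2 := hmono (t - n*h) h (by linarith) (by nlinarith)
        linarith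
  have hnpos : (0:ℝ) < (n:ℝ) * h := by
    have : (1:ℝ) ≤ n := by exact_mod_cast h1n
    nlinarith
  have hωh : 0 ≤ ω h := hnn h hh.le
  calc (ω t - ω h)/t ≤ ((n:ℝ) * ω h)/t := by gcongr; linarith
  _ ≤ ((n:ℝ) * ω h)/((n:ℝ)*h) := by gcongr
  _ = ω h / h := by
        rw [mul_div_mul_left]
        have : (1:ℝ) ≤ n := by exact_mod_cast h1n
        positivity

lemma omega_lim (ω : ℝ → ℝ) (hnn : ∀ x : ℝ, 0 ≤ x → 0 ≤ ω x)
    (hmono : ∀ a b : ℝ, 0 ≤ a → a ≤ b → ω a ≤ ω b)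
    (hcont : ContinuousOn ω (Set.Ici 0))
    (hsub : ∀ a b : ℝ, 0 ≤ a → 0 ≤ b → ω (a + b) ≤ ω a + ω b) (h0 : ω 0 = 0)
    (hratio : ∀ {h t : ℝ}, 0 < h → h ≤ t → (ω t - ω h) / t ≤ ω h / h) :
    Tendsto (fun h : ℝ => ENNReal.ofReal (ω h / h)) (nhdsWithin 0 (Set.Ioi 0))
      (nhds (⨆ δ : {δ : ℝ // 0 < δ}, ENNReal.ofReal (ω δ.1 / δ.1))) := by
  set S := ⨆ δ : {δ : ℝ // 0 < δ}, ENNReal.ofReal (ω δ.1 / δ.1) with hS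
  have hω0 : Tendsto ω (nhdsWithin 0 (Set.Ioi 0)) (nhds 0) := by
    have := (hcont 0 (by simp)).tendsto
    rw [h0] at this
    exact this.mono_left (nhdsWithin_mono _ Set.Ioi_subset_Ici_self)
  apply tendsto_of_le_liminf_of_limsup_le
  · -- S ≤ liminf
    rw [hS]
    apply iSup_le
    rintro ⟨δ, hδ⟩
    have hg : Tendsto (fun h : ℝ => ENNReal.ofReal ((ω δ - ω h) / δ))
        (nhdsWithin 0 (Set.Ioi 0)) (nhds (ENNReal.ofReal (ω δ / δ))) := by
      apply ENNReal.continuous_ofReal.continuousAt.tendsto.comp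
      have : Tendsto (fun h : ℝ => (ω δ - ω h) / δ) (nhdsWithin 0 (Set.Ioi 0))
          (nhds ((ω δ - 0) / δ)) := (tendsto_const_nhds.sub hω0).div_const δ
      simpa using this
    rw [← hg.liminf_eq]
    apply liminf_le_liminf
    filter_upwards [Ioc_mem_nhdsGT_of_mem (by simp [hδ] : (0:ℝ) ∈ Set.Ico 0 δ)] with h hh
    exact ENNReal.ofReal_le_ofReal (hratio hh.1 hh.2)
    all_goals isBoundedDefault
  · -- limsup ≤ S
    refine limsup_le_of_le (by isBoundedDefault) ?_
    filter_upwards [self_mem_nhdsWithin] with h hh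
    exact le_iSup (fun δ : {δ : ℝ // 0 < δ} => ENNReal.ofReal (ω δ.1 / δ.1)) ⟨h, hh⟩
  · isBoundedDefault
  · isBoundedDefault

lemma lint_Ioc {p δ : ℝ} (hp : 0 < p) (hδ : 0 < δ) :
    ∫⁻ t in Set.Ioc 0 δ, ENNReal.ofReal (t ^ (p - 1)) = ENNReal.ofReal (δ ^ p / p) := by
  have hint : IntegrableOn (fun t : ℝ => t ^ (p - 1)) (Set.Ioc 0 δ) := by
    have := intervalIntegral.intervalIntegrable_rpow' (a := 0) (b := δ) (r := p - 1)
      (by linarith)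
    rwa [intervalIntegrable_iff_integrableOn_Ioc_of_le hδ.le] at this
  rw [← ofReal_integral_eq_lintegral_ofReal hint]
  · congr 1
    rw [← intervalIntegral.integral_of_le hδ.le,
      integral_rpow (Or.inl (by linarith : (-1:ℝ) < p - 1))]
    rw [sub_add_cancel, Real.zero_rpow hp.ne']
    ring
  · filter_upwards [ae_restrict_mem measurableSet_Ioc] with t ht
    exact Real.rpow_nonneg ht.1.le _

lemma lint_tail : ∫⁻ t in Set.Ioi (1:ℝ), ENNReal.ofReal (t ^ (-(3:ℝ)/2)) < ⊤ := by
  have hint : IntegrableOn (fun t : ℝ => t ^ (-(3:ℝ)/2)) (Set.Ioi 1) :=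
    integrableOn_Ioi_rpow_of_lt (by norm_num) one_pos
  rw [← ofReal_integral_eq_lintegral_ofReal hint]
  · exact ENNReal.ofReal_lt_top
  · filter_upwards [ae_restrict_mem measurableSet_Ioi] with t ht
    exact Real.rpow_nonneg (by linarith [ht.out] : (0:ℝ) ≤ t) _

lemma integrand_eq (ω : ℝ → ℝ) (hnn : ∀ x : ℝ, 0 ≤ x → 0 ≤ ω x)
    {θ : ℝ} (hθ : 0 < θ) (α : ℝ) {t : ℝ} (ht : 0 < t) :
    ENNReal.ofReal ((t ^ (-α) * ω t) ^ θ / t)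
      = ENNReal.ofReal ((ω t / t) ^ θ) * ENNReal.ofReal (t ^ ((1 - α) * θ - 1)) := by
  have hω : 0 ≤ ω t / t := div_nonneg (hnn t ht.le) ht.le
  have h1 : t ^ (-α) * ω t = (ω t / t) * t ^ (1 - α) := by
    have key : t ^ (-α) * t ^ α = 1 := by
      rw [← Real.rpow_add ht]; simp
    rw [Real.rpow_sub ht, Real.rpow_one]
    field_simp
    linear_combination ω t * key
  have h2 : ((ω t / t) * t ^ (1 - α)) ^ θ = (ω t / t) ^ θ * t ^ ((1 - α) * θ) := by
    rw [Real.mul_rpow hω (Real.rpow_nonneg ht.le _), Real.rpow_mul ht.le]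
  have h3 : (ω t / t) ^ θ * t ^ ((1 - α) * θ) / t
      = (ω t / t) ^ θ * t ^ ((1 - α) * θ - 1) := by
    rw [Real.rpow_sub ht, Real.rpow_one, mul_div_assoc]
  rw [h1, h2, h3, ENNReal.ofReal_mul (Real.rpow_nonneg hω _)]

/-- BBM-type limit: for a modulus of continuity ω and 1 ≤ θ < ∞, with
σ = sup_{δ>0} ω(δ)/δ (in [0,∞]),
lim_{α→1⁻} (1-α) ∫_0^∞ (t^{-α} ω(t))^θ dt/t = σ^θ/θ in [0,∞]. -/
theorem stmt16 (ω : ℝ → ℝ) (θ : ℝ) (hθ : 1 ≤ θ)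
    (hnn : ∀ x : ℝ, 0 ≤ x → 0 ≤ ω x)
    (hmono : ∀ a b : ℝ, 0 ≤ a → a ≤ b → ω a ≤ ω b)
    (hcont : ContinuousOn ω (Set.Ici 0))
    (hbdd : ∃ M : ℝ, ∀ x : ℝ, 0 ≤ x → ω x ≤ M)
    (hsub : ∀ a b : ℝ, 0 ≤ a → 0 ≤ b → ω (a + b) ≤ ω a + ω b)
    (h0 : ω 0 = 0) :
    Tendsto
      (fun α : ℝ => ENNReal.ofReal (1 - α) *
        ∫⁻ t in Set.Ioi (0:ℝ), ENNReal.ofReal ((t ^ (-α) * ω t) ^ θ / t))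
      (nhdsWithin 1 (Set.Iio 1))
      (nhds ((⨆ δ : {δ : ℝ // 0 < δ}, ENNReal.ofReal (ω δ.1 / δ.1)) ^ θ /
        ENNReal.ofReal θ)) := by
  have hθ0 : (0:ℝ) < θ := lt_of_lt_of_le one_pos hθ
  set S := ⨆ δ : {δ : ℝ // 0 < δ}, ENNReal.ofReal (ω δ.1 / δ.1) with hSdef
  set F := fun α : ℝ => ENNReal.ofReal (1 - α) *
      ∫⁻ t in Set.Ioi (0:ℝ), ENNReal.ofReal ((t ^ (-α) * ω t) ^ θ / t) with hF
  have oθpos : (0:ℝ≥0∞) < ENNReal.ofReal θ := ENNReal.ofReal_pos.mpr hθ0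
  have oθtop : ENNReal.ofReal θ ≠ ⊤ := ENNReal.ofReal_ne_top
  have limA := omega_lim ω hnn hmono hcont hsub h0
    (fun {h t} hh hht => omega_ratio ω hnn hmono hsub h0 hh hht)
  rw [← hSdef] at limA
  apply tendsto_of_le_liminf_of_limsup_le
  · -- liminf part
    have claim : ∀ b : ℝ≥0∞, b < S →
        b ^ θ / ENNReal.ofReal θ ≤ Filter.liminf F (nhdsWithin 1 (Set.Iio 1)) := by
      intro b hb
      have hbtop : b ≠ ⊤ := (hb.trans_le le_top).ne
      have hbθtop : b ^ θ ≠ ⊤ := ENNReal.rpow_ne_top_of_nonneg hθ0.le hbtop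
      have hev : ∀ᶠ h in nhdsWithin (0:ℝ) (Set.Ioi 0),
          b < ENNReal.ofReal (ω h / h) := limA.eventually (eventually_gt_nhds hb)
      have hev' : {h : ℝ | b < ENNReal.ofReal (ω h / h)} ∈ nhdsWithin (0:ℝ) (Set.Ioi 0) :=
        hev
      rw [mem_nhdsGT_iff_exists_Ioc_subset] at hev'
      obtain ⟨δ, hδpos, hδ⟩ := hev'
      rw [Set.mem_Ioi] at hδpos
      set G := fun α : ℝ => b ^ θ * ENNReal.ofReal (δ ^ ((1-α)*θ) / θ) with hG
      have hle : ∀ᶠ α in nhdsWithin (1:ℝ) (Set.Iio 1), G α ≤ F α := by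
        filter_upwards [Ioo_mem_nhdsLT_of_mem
          (show (1:ℝ) ∈ Set.Ioc 0 1 by norm_num)] with α hα
        have hα1 : α < 1 := hα.2
        have hp : 0 < (1-α)*θ := by nlinarith
        have h1α : (0:ℝ) < 1 - α := by linarith
        have hr : (1-α) * (δ^((1-α)*θ)/((1-α)*θ)) = δ^((1-α)*θ)/θ := by
          field_simp
        calc G α = b ^ θ * (ENNReal.ofReal (1-α) * ENNReal.ofReal (δ^((1-α)*θ)/((1-α)*θ))) := by
              rw [← ENNReal.ofReal_mul h1α.le, hr]
        _ = ENNReal.ofReal (1-α) * (b ^ θ * ENNReal.ofReal (δ^((1-α)*θ)/((1-α)*θ))) := by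
              ring
        _ = ENNReal.ofReal (1-α) *
              ∫⁻ t in Set.Ioc (0:ℝ) δ, b ^ θ * ENNReal.ofReal (t^((1-α)*θ - 1)) := by
              rw [lintegral_const_mul' _ _ hbθtop, lint_Ioc hp hδpos]
        _ ≤ ENNReal.ofReal (1-α) *
              ∫⁻ t in Set.Ioc (0:ℝ) δ, ENNReal.ofReal ((t ^ (-α) * ω t) ^ θ / t) := by
              apply mul_le_mul_right
              apply setLIntegral_mono' measurableSet_Ioc
              intro t ht
              rw [integrand_eq ω hnn hθ0 α ht.1]
              apply mul_le_mul_left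
              rw [← ENNReal.ofReal_rpow_of_nonneg (div_nonneg (hnn t ht.1.le) ht.1.le) hθ0.le]
              exact ENNReal.rpow_le_rpow (hδ ht).le hθ0.le
        _ ≤ F α := mul_le_mul_right (lintegral_mono_set Set.Ioc_subset_Ioi_self) _
      have hGlim : Tendsto G (nhdsWithin 1 (Set.Iio 1)) (𝓝 (b ^ θ * ENNReal.ofReal (1/θ))) := by
        apply ENNReal.Tendsto.const_mul ?_ (Or.inr hbθtop)
        apply ENNReal.continuous_ofReal.continuousAt.tendsto.comp
        have h1 : Tendsto (fun α : ℝ => (1-α)*θ) (nhdsWithin 1 (Set.Iio 1)) (𝓝 0) := by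
          have hcont2 : Continuous (fun α : ℝ => (1-α)*θ) := by continuity
          have := hcont2.tendsto (1:ℝ)
          simp only [sub_self, zero_mul] at this
          exact this.mono_left nhdsWithin_le_nhds
        have hc : Continuous fun y : ℝ => δ ^ y := by
          have : (fun y : ℝ => δ ^ y) = fun y => Real.exp (Real.log δ * y) := by
            funext y; rw [Real.rpow_def_of_pos hδpos]
          rw [this]
          exact Real.continuous_exp.comp (continuous_const.mul continuous_id)
        have h2 : Tendsto (fun α : ℝ => δ ^ ((1-α)*θ)) (nhdsWithin 1 (Set.Iio 1)) (𝓝 1) := by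
          have := (hc.tendsto 0).comp h1
          simpa [Function.comp_def] using this
        exact h2.div_const θ
      have : b ^ θ * ENNReal.ofReal (1/θ) = b ^ θ / ENNReal.ofReal θ := by
        rw [one_div, ENNReal.ofReal_inv_of_pos hθ0, div_eq_mul_inv]
      rw [← this, ← hGlim.liminf_eq]
      apply liminf_le_liminf hle
      all_goals isBoundedDefault
    rcases eq_or_ne S 0 with hS0 | hS0
    · rw [hS0, ENNReal.zero_rpow_of_pos hθ0, ENNReal.zero_div]
      exact zero_le
    · obtain ⟨u, -, humem, hulim⟩ :=
        exists_seq_strictMono_tendsto' (pos_iff_ne_zero.mpr hS0 : (0:ℝ≥0∞) < S)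
      have hulim' : Tendsto (fun n => u n ^ θ / ENNReal.ofReal θ) atTop
          (𝓝 (S ^ θ / ENNReal.ofReal θ)) := by
        simp_rw [div_eq_mul_inv]
        exact ENNReal.Tendsto.mul_const (hulim.ennrpow_const θ)
          (Or.inr (ENNReal.inv_ne_top.mpr oθpos.ne'))
      exact le_of_tendsto' hulim' (fun n => claim (u n) (humem n).2)
  · -- limsup part
    by_cases hStop : S = ⊤
    · rw [hStop, ENNReal.top_rpow_of_pos hθ0, ENNReal.top_div_of_ne_top oθtop]
      exact le_top
    · obtain ⟨M, hM⟩ := hbdd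
      have hMnn : 0 ≤ M := le_trans (hnn 1 zero_le_one) (hM 1 zero_le_one)
      set s := S.toReal with hs
      have hsnn : 0 ≤ s := ENNReal.toReal_nonneg
      have hsS : ∀ t : ℝ, 0 < t → ω t / t ≤ s := by
        intro t ht
        have : ENNReal.ofReal (ω t / t) ≤ S :=
          le_iSup (fun δ : {δ : ℝ // 0 < δ} => ENNReal.ofReal (ω δ.1 / δ.1)) ⟨t, ht⟩
        rwa [ENNReal.ofReal_le_iff_le_toReal hStop] at this
      set T := ∫⁻ t in Set.Ioi (1:ℝ), ENNReal.ofReal (t ^ (-(3:ℝ)/2)) with hT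
      have hTtop : T ≠ ⊤ := lint_tail.ne
      set C := ENNReal.ofReal (M ^ θ) * T with hC
      have hCtop : C ≠ ⊤ := ENNReal.mul_ne_top ENNReal.ofReal_ne_top hTtop
      have hLS : S ^ θ / ENNReal.ofReal θ = ENNReal.ofReal (s ^ θ / θ) := by
        rw [ENNReal.ofReal_div_of_pos hθ0, ← ENNReal.ofReal_rpow_of_nonneg hsnn hθ0.le,
          ENNReal.ofReal_toReal hStop]
      have hle : ∀ᶠ α in nhdsWithin (1:ℝ) (Set.Iio 1),
          F α ≤ S ^ θ / ENNReal.ofReal θ + ENNReal.ofReal (1-α) * C := by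
        filter_upwards [Ioo_mem_nhdsLT_of_mem
          (show (1:ℝ) ∈ Set.Ioc (1/2) 1 by norm_num)] with α hα
        have hα1 : α < 1 := hα.2
        have hα2 : (1:ℝ)/2 < α := hα.1
        have hp : 0 < (1-α)*θ := by nlinarith
        have hrest : (volume : Measure ℝ).restrict (Set.Ioi 0)
            = volume.restrict (Set.Ioc 0 1) + volume.restrict (Set.Ioi 1) := by
          rw [← Measure.restrict_union (Set.Ioc_disjoint_Ioi le_rfl) measurableSet_Ioi,
            Set.Ioc_union_Ioi_eq_Ioi zero_le_one]
        have hsplit : (∫⁻ t in Set.Ioi (0:ℝ), ENNReal.ofReal ((t ^ (-α) * ω t) ^ θ / t))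
            = (∫⁻ t in Set.Ioc (0:ℝ) 1, ENNReal.ofReal ((t ^ (-α) * ω t) ^ θ / t))
            + ∫⁻ t in Set.Ioi (1:ℝ), ENNReal.ofReal ((t ^ (-α) * ω t) ^ θ / t) := by
          rw [hrest, lintegral_add_measure]
        have hI1 : ∫⁻ t in Set.Ioc (0:ℝ) 1, ENNReal.ofReal ((t ^ (-α) * ω t) ^ θ / t)
            ≤ ENNReal.ofReal (s ^ θ) * ENNReal.ofReal (1/((1-α)*θ)) := by
          calc ∫⁻ t in Set.Ioc (0:ℝ) 1, ENNReal.ofReal ((t ^ (-α) * ω t) ^ θ / t)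
              ≤ ∫⁻ t in Set.Ioc (0:ℝ) 1,
                ENNReal.ofReal (s ^ θ) * ENNReal.ofReal (t^((1-α)*θ - 1)) := by
                apply setLIntegral_mono' measurableSet_Ioc
                intro t ht
                rw [integrand_eq ω hnn hθ0 α ht.1]
                apply mul_le_mul_left
                exact ENNReal.ofReal_le_ofReal
                  (Real.rpow_le_rpow (div_nonneg (hnn t ht.1.le) ht.1.le)
                    (hsS t ht.1) hθ0.le)
          _ = ENNReal.ofReal (s ^ θ) * ENNReal.ofReal ((1:ℝ)^((1-α)*θ)/((1-α)*θ)) := by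
                rw [lintegral_const_mul' _ _ ENNReal.ofReal_ne_top, lint_Ioc hp one_pos]
          _ = ENNReal.ofReal (s ^ θ) * ENNReal.ofReal (1/((1-α)*θ)) := by
                rw [Real.one_rpow]
        have hI2 : ∫⁻ t in Set.Ioi (1:ℝ), ENNReal.ofReal ((t ^ (-α) * ω t) ^ θ / t) ≤ C := by
          rw [hC, hT, ← lintegral_const_mul' _ _ ENNReal.ofReal_ne_top]
          apply setLIntegral_mono' measurableSet_Ioi
          intro t ht
          rw [Set.mem_Ioi] at ht
          have ht0 : (0:ℝ) < t := lt_trans one_pos ht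
          have key : (t ^ (-α) * ω t) ^ θ / t ≤ M ^ θ * t ^ (-(3:ℝ)/2) := by
            have s1 : t ^ (-α) * ω t ≤ t ^ (-α) * M :=
              mul_le_mul_of_nonneg_left (hM t ht0.le) (Real.rpow_nonneg ht0.le _)
            have s2 : (t ^ (-α) * ω t) ^ θ ≤ (t ^ (-α) * M) ^ θ :=
              Real.rpow_le_rpow (mul_nonneg (Real.rpow_nonneg ht0.le _) (hnn t ht0.le))
                s1 hθ0.le
            have s3 : (t ^ (-α) * M) ^ θ = t ^ (-α*θ) * M ^ θ := by
              rw [Real.mul_rpow (Real.rpow_nonneg ht0.le _) hMnn, Real.rpow_mul ht0.le]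
            have s4 : t ^ (-α*θ) / t = t ^ (-α*θ - 1) := by
              rw [Real.rpow_sub ht0, Real.rpow_one]
            have s5 : t ^ (-α*θ - 1) ≤ t ^ (-(3:ℝ)/2) :=
              Real.rpow_le_rpow_of_exponent_le ht.le (by nlinarith)
            calc (t ^ (-α) * ω t) ^ θ / t ≤ (t ^ (-α) * M) ^ θ / t := by gcongr
            _ = M ^ θ * (t ^ (-α*θ) / t) := by rw [s3]; ring
            _ = M ^ θ * t ^ (-α*θ - 1) := by rw [s4]
            _ ≤ M ^ θ * t ^ (-(3:ℝ)/2) := by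
                  apply mul_le_mul_of_nonneg_left s5 (Real.rpow_nonneg hMnn θ)
          calc ENNReal.ofReal ((t ^ (-α) * ω t) ^ θ / t)
              ≤ ENNReal.ofReal (M ^ θ * t ^ (-(3:ℝ)/2)) := ENNReal.ofReal_le_ofReal key
          _ = ENNReal.ofReal (M ^ θ) * ENNReal.ofReal (t ^ (-(3:ℝ)/2)) :=
              ENNReal.ofReal_mul (Real.rpow_nonneg hMnn θ)
        calc F α = ENNReal.ofReal (1-α) *
              ((∫⁻ t in Set.Ioc (0:ℝ) 1, ENNReal.ofReal ((t ^ (-α) * ω t) ^ θ / t))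
              + ∫⁻ t in Set.Ioi (1:ℝ), ENNReal.ofReal ((t ^ (-α) * ω t) ^ θ / t)) := by
              simp only [hF]; rw [hsplit]
        _ ≤ ENNReal.ofReal (1-α) *
              (ENNReal.ofReal (s ^ θ) * ENNReal.ofReal (1/((1-α)*θ)) + C) :=
              mul_le_mul_right (add_le_add hI1 hI2) _
        _ = ENNReal.ofReal (1-α) * (ENNReal.ofReal (s ^ θ) * ENNReal.ofReal (1/((1-α)*θ)))
              + ENNReal.ofReal (1-α) * C := by ring
        _ = S ^ θ / ENNReal.ofReal θ + ENNReal.ofReal (1-α) * C := by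
              rw [hLS]
              congr 1
              have h1α : (0:ℝ) < 1 - α := by linarith
              have hr : (1-α) * (s^θ * (1/((1-α)*θ))) = s^θ/θ := by
                field_simp
              rw [← hr, ENNReal.ofReal_mul h1α.le,
                ENNReal.ofReal_mul (Real.rpow_nonneg hsnn θ)]
      have hH : Tendsto (fun α : ℝ => S ^ θ / ENNReal.ofReal θ + ENNReal.ofReal (1-α) * C)
          (nhdsWithin 1 (Set.Iio 1)) (𝓝 (S ^ θ / ENNReal.ofReal θ)) := by
        have h2 : Tendsto (fun α : ℝ => ENNReal.ofReal (1-α) * C)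
            (nhdsWithin 1 (Set.Iio 1)) (𝓝 0) := by
          have h3 : Tendsto (fun α : ℝ => ENNReal.ofReal (1-α)) (nhdsWithin 1 (Set.Iio 1))
              (𝓝 0) := by
            have hcont3 : Continuous (fun α : ℝ => (1:ℝ)-α) := by continuity
            have := ENNReal.continuous_ofReal.continuousAt.tendsto.comp
              (hcont3.tendsto (1:ℝ))
            simp only [sub_self, ENNReal.ofReal_zero] at this
            exact this.mono_left nhdsWithin_le_nhds
          have := ENNReal.Tendsto.mul_const h3 (Or.inr hCtop)
          simpa using this
        have := h2.const_add (S ^ θ / ENNReal.ofReal θ)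
        simpa using this
      rw [← hH.limsup_eq]
      apply limsup_le_limsup hle
      all_goals isBoundedDefault
  all_goals isBoundedDefault
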